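/- For disjoint index sets a, b, c and a square matrix M with all principal submatrices invertible, inv_{a∪b}(inv_{b∪c} M) = inv_{a∪c} M; that is, partial inversion on overlapping index sets cancels on the common indices. -/

import Mathlib

/-- Partial inversion of a square real matrix with respect to a single index `k`. -/
noncomputable def invStep {ι : Type*} [DecidableEq ι] (M : Matrix ι ι ℝ) (k : ι) : Matrix ι ι ℝ :=
  Matrix.of fun i j =>
    if i = k then (if j = k then 1 / M k k else - M k j / M k k)
    else if j = k then M i k / M k k
    else M i j - M i k * M k j / M k k

/-- Partial inversion with respect to a sequence of indices, applied in order. -/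
noncomputable def invList {ι : Type*} [DecidableEq ι] (l : List ι) (M : Matrix ι ι ℝ) : Matrix ι ι ℝ :=
  l.foldl invStep M

/-- All principal submatrices of `M` are invertible. -/
def allPrincipalInvertible {ι : Type*} [Fintype ι] [DecidableEq ι]
    (M : Matrix ι ι ℝ) : Prop :=
  ∀ s : Finset ι,
    (M.submatrix (fun i : s => (i : ι)) (fun i : s => (i : ι))).det ≠ 0

section Aux

variable {ι : Type*} [Fintype ι] [DecidableEq ι]

/-- Swap `x` and `y` on the index set `U`: result is `y` on `U`, `x` off `U`. -/
def swapOn (U : Finset ι) (x y : ι → ℝ) : ι → ℝ := fun i => if i ∈ U then y i else x i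

/-- The defining relation of partial inversion: `N = inv_U M` iff exchanging input/output
coordinates on `U`. -/
def relOn (U : Finset ι) (M N : Matrix ι ι ℝ) : Prop :=
  ∀ x : ι → ℝ, N.mulVec (swapOn U x (M.mulVec x)) = swapOn U (M.mulVec x) x

/-- The linear map `x ↦ swapOn U x (M x)`. -/
noncomputable def fU (M : Matrix ι ι ℝ) (U : Finset ι) : (ι → ℝ) →ₗ[ℝ] (ι → ℝ) where
  toFun x := swapOn U x (M.mulVec x)
  map_add' x y := by
    funext i
    by_cases h : i ∈ U <;> simp [swapOn, h, Matrix.mulVec_add]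
  map_smul' c x := by
    funext i
    by_cases h : i ∈ U <;> simp [swapOn, h, Matrix.mulVec_smul]

lemma fU_injective (M : Matrix ι ι ℝ) (hM : allPrincipalInvertible M) (U : Finset ι) :
    Function.Injective (fU M U) := by
  rw [← LinearMap.ker_eq_bot, LinearMap.ker_eq_bot']
  intro x hx
  have hx' : ∀ i, (if i ∈ U then M.mulVec x i else x i) = 0 := by
    intro i
    have := congrFun hx i
    simpa [fU, swapOn] using this
  have hoff : ∀ i, i ∉ U → x i = 0 := by
    intro i hi; have := hx' i; simpa [hi] using this
  have hon : ∀ i, i ∈ U → M.mulVec x i = 0 := by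
    intro i hi; have := hx' i; simpa [hi] using this
  -- use invertibility of the principal submatrix on U
  set A : Matrix U U ℝ := M.submatrix (fun i : U => (i : ι)) (fun i : U => (i : ι)) with hA
  have hdet : A.det ≠ 0 := hM U
  have hInv : IsUnit A.det := isUnit_iff_ne_zero.mpr hdet
  set v : U → ℝ := fun j => x (j : ι) with hv
  have hAv : A.mulVec v = 0 := by
    funext i
    have : A.mulVec v i = M.mulVec x (i : ι) := by
      simp only [Matrix.mulVec, dotProduct, hA, Matrix.submatrix_apply, hv]
      rw [Finset.sum_coe_sort U (fun j => M (i : ι) j * x j)]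
      refine Finset.sum_subset (Finset.subset_univ U) ?_
      intro j _ hj
      rw [hoff j hj, mul_zero]
    rw [this, hon _ i.2]; rfl
  have hv0 : v = 0 := by
    have := congrArg (fun w => (A⁻¹).mulVec w) hAv
    simpa [Matrix.mulVec_mulVec, Matrix.nonsing_inv_mul A hInv] using this
  funext i
  by_cases hi : i ∈ U
  · exact congrFun hv0 ⟨i, hi⟩
  · exact hoff i hi

lemma fU_surjective (M : Matrix ι ι ℝ) (hM : allPrincipalInvertible M) (U : Finset ι) :
    Function.Surjective (fU M U) :=
  LinearMap.injective_iff_surjective.mp (fU_injective M hM U)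

/-- Composition identity: swapping additionally at `k` moves `U` to `U ∆ {k}`. -/
lemma swap_comp (M N : Matrix ι ι ℝ) (U : Finset ι) (h : relOn U M N) (k : ι) (x : ι → ℝ) :
    swapOn {k} (fU M U x) (N.mulVec (fU M U x)) = fU M (symmDiff U {k}) x := by
  have hN := h x
  funext i
  by_cases hik : i = k
  · subst hik
    by_cases hi : i ∈ U <;>
      simp [swapOn, fU, hN, Finset.mem_symmDiff, hi]
  · by_cases hi : i ∈ U <;>
      simp [swapOn, fU, Finset.mem_symmDiff, hi, hik]

/-- The pivot entry is nonzero. -/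
lemma pivot_ne_zero (M : Matrix ι ι ℝ) (hM : allPrincipalInvertible M)
    (U : Finset ι) (N : Matrix ι ι ℝ) (h : relOn U M N) (k : ι) : N k k ≠ 0 := by
  intro hzero
  -- the map g z = swapOn {k} z (N z) kills Pi.single k 1, but g ∘ fU U = fU (U ∆ {k})
  set g : (ι → ℝ) → (ι → ℝ) := fun z => swapOn {k} z (N.mulVec z) with hg
  have hcomp : ∀ x, g (fU M U x) = fU M (symmDiff U {k}) x := fun x => swap_comp M N U h k x
  have hginj : Function.Injective g := by
    intro a b hab
    obtain ⟨a', ha'⟩ := fU_surjective M hM U a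
    obtain ⟨b', hb'⟩ := fU_surjective M hM U b
    rw [← ha', ← hb', hcomp, hcomp] at hab
    rw [← ha', ← hb', fU_injective M hM (symmDiff U {k}) hab]
  have h1 : g (Pi.single k 1) = 0 := by
    funext i
    by_cases hik : i = k
    · subst hik
      have : N.mulVec (Pi.single i 1) i = N i i := by
        simp [Matrix.mulVec_single]
      simp [hg, swapOn, this, hzero]
    · simp [hg, swapOn, hik, Pi.single_eq_of_ne hik]
  have h0 : g 0 = 0 := by
    funext i
    by_cases hik : i = k <;> simp [hg, swapOn, hik]
  have := hginj (h1.trans h0.symm)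
  have := congrFun this k
  simp at this

/-- Core computation: a single sweep step satisfies the exchange relation. -/
lemma invStep_core (N : Matrix ι ι ℝ) (k : ι) (hk : N k k ≠ 0) (z : ι → ℝ) :
    (invStep N k).mulVec (swapOn {k} z (N.mulVec z)) = swapOn {k} (N.mulVec z) z := by
  have hS : N.mulVec z k = ∑ j, N k j * z j := rfl
  have hsplit : ∀ (f : ι → ℝ), ∑ j, f j = f k + ∑ j ∈ Finset.univ.erase k, f j := by
    intro f
    rw [Finset.add_sum_erase _ f (Finset.mem_univ k)]
  have ht : ∑ j ∈ Finset.univ.erase k, N k j * z j = N.mulVec z k - N k k * z k := by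
    rw [hS, hsplit (fun j => N k j * z j)]; ring
  funext i
  by_cases hik : i = k
  · subst hik
    show ∑ j, invStep N i i j * (if j ∈ ({i} : Finset ι) then N.mulVec z j else z j)
        = if i ∈ ({i} : Finset ι) then z i else N.mulVec z i
    rw [hsplit]
    have : ∑ j ∈ Finset.univ.erase i,
        invStep N i i j * (if j ∈ ({i} : Finset ι) then N.mulVec z j else z j)
        = ∑ j ∈ Finset.univ.erase i, (N i j * z j) * (-(N i i)⁻¹) := by
      refine Finset.sum_congr rfl ?_
      intro j hj
      have hji : j ≠ i := Finset.ne_of_mem_erase hj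
      have e1 : invStep N i i j = - N i j / N i i := by simp [invStep, hji]
      have e2 : (if j ∈ ({i} : Finset ι) then N.mulVec z j else z j) = z j := by
        simp [hji]
      rw [e1, e2]
      field_simp
    rw [this, ← Finset.sum_mul, ht]
    simp only [invStep, Matrix.of_apply, if_pos rfl, Finset.mem_singleton, eq_self_iff_true, if_true]
    field_simp
    ring
  · show ∑ j, invStep N k i j * (if j ∈ ({k} : Finset ι) then N.mulVec z j else z j)
        = if i ∈ ({k} : Finset ι) then z i else N.mulVec z i
    rw [hsplit]
    have : ∑ j ∈ Finset.univ.erase k,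
        invStep N k i j * (if j ∈ ({k} : Finset ι) then N.mulVec z j else z j)
        = (∑ j ∈ Finset.univ.erase k, N i j * z j)
          - (∑ j ∈ Finset.univ.erase k, N k j * z j) * (N i k / N k k) := by
      have step : ∀ j ∈ Finset.univ.erase k,
          invStep N k i j * (if j ∈ ({k} : Finset ι) then N.mulVec z j else z j)
          = N i j * z j - (N k j * z j) * (N i k / N k k) := by
        intro j hj
        have hjk : j ≠ k := Finset.ne_of_mem_erase hj
        have e1 : invStep N k i j = N i j - N i k * N k j / N k k := by
          simp [invStep, hik, hjk]
        have e2 : (if j ∈ ({k} : Finset ι) then N.mulVec z j else z j) = z j := by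
          simp [hjk]
        rw [e1, e2]
        ring
      rw [Finset.sum_congr rfl step, Finset.sum_sub_distrib, ← Finset.sum_mul]
    rw [this, ht]
    have hNzi : N.mulVec z i = N i k * z k + ∑ j ∈ Finset.univ.erase k, N i j * z j := by
      show ∑ j, N i j * z j = _
      rw [hsplit (fun j => N i j * z j)]
    simp only [invStep, Matrix.of_apply, if_neg hik, if_pos rfl, Finset.mem_singleton,
      if_neg hik, hNzi, eq_self_iff_true, if_true]
    field_simp
    ring

/-- One sweep step transforms the relation set by symmetric difference with `{k}`. -/
lemma relOn_invStep (M : Matrix ι ι ℝ) (hM : allPrincipalInvertible M)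
    (U : Finset ι) (N : Matrix ι ι ℝ) (h : relOn U M N) (k : ι) :
    relOn (symmDiff U {k}) M (invStep N k) := by
  have hk : N k k ≠ 0 := pivot_ne_zero M hM U N h k
  intro x
  have hin : swapOn (symmDiff U {k}) x (M.mulVec x)
      = swapOn {k} (fU M U x) (N.mulVec (fU M U x)) := by
    rw [swap_comp M N U h k x]; rfl
  rw [hin, invStep_core N k hk (fU M U x)]
  have hN := h x
  funext i
  by_cases hik : i = k
  · subst hik
    by_cases hi : i ∈ U <;>
      simp [swapOn, fU, Finset.mem_symmDiff, hi]
  · by_cases hi : i ∈ U <;>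
      simp [swapOn, fU, hN, Finset.mem_symmDiff, hi, hik]

lemma relOn_invList (M : Matrix ι ι ℝ) (hM : allPrincipalInvertible M) :
    ∀ (l : List ι) (U : Finset ι) (N : Matrix ι ι ℝ), relOn U M N →
      relOn (l.foldl (fun U k => symmDiff U {k}) U) M (invList l N) := by
  intro l
  induction l with
  | nil => intro U N h; simpa [invList] using h
  | cons k l ih =>
    intro U N h
    have := ih (symmDiff U {k}) (invStep N k) (relOn_invStep M hM U N h k)
    simpa [invList] using this

lemma foldl_symmDiff (l : List ι) (hl : l.Nodup) (U : Finset ι) :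
    l.foldl (fun U k => symmDiff U {k}) U = symmDiff U l.toFinset := by
  induction l generalizing U with
  | nil => simpa using (symmDiff_bot U).symm
  | cons k l ih =>
    simp only [List.nodup_cons] at hl
    rw [List.foldl_cons, ih hl.2, List.toFinset_cons, symmDiff_assoc]
    congr 1
    have hd : Disjoint ({k} : Finset ι) l.toFinset := by
      simp [Finset.disjoint_left, hl.1]
    rw [hd.symmDiff_eq_sup]
    ext a; simp [or_comm]

lemma relOn_unique (M : Matrix ι ι ℝ) (hM : allPrincipalInvertible M) (U : Finset ι)
    (N₁ N₂ : Matrix ι ι ℝ) (h1 : relOn U M N₁) (h2 : relOn U M N₂) : N₁ = N₂ := by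
  have hmv : ∀ w, N₁.mulVec w = N₂.mulVec w := by
    intro w
    obtain ⟨x, hx⟩ := fU_surjective M hM U w
    have hx' : swapOn U x (M.mulVec x) = w := hx
    rw [← hx', h1 x, h2 x]
  ext i j
  have := congrFun (hmv (Pi.single j 1)) i
  simpa [Matrix.mulVec_single] using this

end Aux

/-- partial inversion on overlapping index sets cancels on common indices:
`inv_{a∪b}(inv_{b∪c} M) = inv_{a∪c} M` for disjoint `a`, `b`, `c`. -/
theorem invList_cancel {ι : Type*} [Fintype ι] [DecidableEq ι]
    (M : Matrix ι ι ℝ) (hM : allPrincipalInvertible M)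
    (la lb lc : List ι) (hna : la.Nodup) (hnb : lb.Nodup) (hnc : lc.Nodup)
    (hab : Disjoint la.toFinset lb.toFinset)
    (hbc : Disjoint lb.toFinset lc.toFinset)
    (hac : Disjoint la.toFinset lc.toFinset) :
    invList (la ++ lb) (invList (lb ++ lc) M) = invList (la ++ lc) M := by
  have h0 : relOn (∅ : Finset ι) M M := by
    intro x
    have hx : swapOn ∅ x (M.mulVec x) = x := by funext i; simp [swapOn]
    rw [hx]; funext i; simp [swapOn]
  have hnbc : (lb ++ lc).Nodup :=
    List.Nodup.append hnb hnc (List.disjoint_toFinset_iff_disjoint.mp hbc)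
  have hnab : (la ++ lb).Nodup :=
    List.Nodup.append hna hnb (List.disjoint_toFinset_iff_disjoint.mp hab)
  have hnac : (la ++ lc).Nodup :=
    List.Nodup.append hna hnc (List.disjoint_toFinset_iff_disjoint.mp hac)
  have h1 := relOn_invList M hM (lb ++ lc) ∅ M h0
  rw [foldl_symmDiff _ hnbc] at h1
  have h2 := relOn_invList M hM (la ++ lb) _ _ h1
  rw [foldl_symmDiff _ hnab] at h2
  have h3 := relOn_invList M hM (la ++ lc) ∅ M h0
  rw [foldl_symmDiff _ hnac] at h3
  have hUeq : symmDiff (symmDiff (∅ : Finset ι) (lb ++ lc).toFinset) (la ++ lb).toFinset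
      = symmDiff (∅ : Finset ι) (la ++ lc).toFinset := by
    have ha : ∀ x ∈ la.toFinset, x ∉ lb.toFinset := fun x hx => Finset.disjoint_left.mp hab hx
    have hb : ∀ x ∈ lb.toFinset, x ∉ lc.toFinset := fun x hx => Finset.disjoint_left.mp hbc hx
    have hc : ∀ x ∈ la.toFinset, x ∉ lc.toFinset := fun x hx => Finset.disjoint_left.mp hac hx
    ext x
    simp only [Finset.mem_symmDiff, List.toFinset_append, Finset.mem_union,
      Finset.notMem_empty, false_and, and_true, false_or, not_or]
    by_cases h1 : x ∈ la.toFinset <;> by_cases h2 : x ∈ lb.toFinset <;>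
      by_cases h3 : x ∈ lc.toFinset <;>
        first
        | (exfalso; first | exact ha x h1 h2 | exact hb x h2 h3 | exact hc x h1 h3)
        | simp [h1, h2, h3]
  rw [hUeq] at h2
  exact relOn_unique M hM _ _ _ h2 h3
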